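/- arXiv:1701.00388 — 4 statements merged into one kernel-verified Lean document; each statement's English description precedes it below -/
import Mathlib

section
/- For every positive integer $k$, $\sum_{n=1}^{\infty} \frac{H_n}{n(n+k)} = \frac{1}{k}\left( \frac{1}{2}H_k^2 + \frac{1}{2}\zeta_k(2) + \zeta(2) - \frac{H_k}{k} \right)$. -/
open Finset Filter Topology Real

noncomputable def H (n : ℕ) : ℝ := ∑ j ∈ Finset.Icc 1 n, (1 : ℝ) / j

noncomputable def zh (m n : ℕ) : ℝ := ∑ j ∈ Finset.Icc 1 n, (1 : ℝ) / (j : ℝ) ^ m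

lemma H_succ (n : ℕ) : H (n + 1) = H n + 1 / ((n : ℝ) + 1) := by
  unfold H
  rw [Finset.sum_Icc_succ_top (Nat.le_add_left 1 n)]
  push_cast; ring

lemma zh_succ (n : ℕ) : zh 2 (n + 1) = zh 2 n + 1 / ((n : ℝ) + 1) ^ 2 := by
  unfold zh
  rw [Finset.sum_Icc_succ_top (Nat.le_add_left 1 n)]
  push_cast; ring

lemma H_eq (n : ℕ) : H n = ∑ j ∈ Finset.range n, 1 / ((j : ℝ) + 1) := by
  induction n with
  | zero => simp [H]
  | succ n ih => rw [H_succ, Finset.sum_range_succ, ih]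

lemma lemA (c : ℝ) (hc : 0 < c) (k : ℕ) (hk : 0 < k) :
    HasSum (fun n : ℕ => 1 / (((n : ℝ) + c) * ((n : ℝ) + c + k)))
      ((1 / (k : ℝ)) * ∑ m ∈ Finset.range k, 1 / ((m : ℝ) + c)) := by
  have hk' : (0 : ℝ) < k := Nat.cast_pos.mpr hk
  set g : ℕ → ℝ := fun n => 1 / ((k : ℝ) * ((n : ℝ) + c)) with hgdef
  have key : ∀ n : ℕ, 1 / (((n : ℝ) + c) * ((n : ℝ) + c + k)) = g n - g (n + k) := by
    intro n
    have h1 : ((n : ℝ) + c) ≠ 0 := by positivity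
    have h2 : ((n : ℝ) + c + k) ≠ 0 := by positivity
    have h3 : (((n + k : ℕ) : ℝ) + c) = ((n : ℝ) + c + k) := by push_cast; ring
    simp only [hgdef, h3]
    field_simp
    ring
  rw [hasSum_iff_tendsto_nat_of_nonneg (fun i => by positivity)]
  have hps : ∀ N : ℕ, ∑ n ∈ Finset.range N, 1 / (((n : ℝ) + c) * ((n : ℝ) + c + k))
      = ∑ i ∈ Finset.range k, g i - ∑ i ∈ Finset.range k, g (N + i) := by
    intro N
    have A := Finset.sum_range_add g k N
    have B := Finset.sum_range_add g N k
    rw [Nat.add_comm k N] at A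
    calc ∑ n ∈ Finset.range N, 1 / (((n : ℝ) + c) * ((n : ℝ) + c + k))
        = ∑ n ∈ Finset.range N, (g n - g (n + k)) := Finset.sum_congr rfl fun n _ => key n
      _ = ∑ n ∈ Finset.range N, g n - ∑ n ∈ Finset.range N, g (k + n) := by
          rw [Finset.sum_sub_distrib]
          congr 1
          exact Finset.sum_congr rfl fun n _ => by rw [Nat.add_comm]
      _ = _ := by linarith
  have h0 : Tendsto (fun N : ℕ => ∑ i ∈ Finset.range k, g (N + i)) atTop (𝓝 0) := by
    have ht : Tendsto (fun N : ℕ => ∑ i ∈ Finset.range k, g (N + i)) atTop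
        (𝓝 (∑ _i ∈ Finset.range k, (0 : ℝ))) := by
      apply tendsto_finset_sum
      intro i _
      have h1 : Tendsto (fun N : ℕ => ((k : ℝ) * (((N + i : ℕ) : ℝ) + c))) atTop atTop := by
        apply Tendsto.const_mul_atTop hk'
        apply tendsto_atTop_add_const_right
        exact tendsto_natCast_atTop_atTop.comp (tendsto_add_atTop_nat i)
      have h2 := h1.inv_tendsto_atTop
      simp only [hgdef, one_div]
      exact h2
    simpa using ht
  have hS : (1 / (k : ℝ)) * ∑ m ∈ Finset.range k, 1 / ((m : ℝ) + c)
      = ∑ i ∈ Finset.range k, g i := by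
    rw [Finset.mul_sum]
    refine Finset.sum_congr rfl fun m _ => ?_
    simp only [hgdef]
    rw [one_div_mul_one_div]
  rw [hS]
  have h3 : Tendsto (fun N : ℕ => (∑ i ∈ Finset.range k, g i) - ∑ i ∈ Finset.range k, g (N + i))
      atTop (𝓝 ((∑ i ∈ Finset.range k, g i) - 0)) := Tendsto.sub tendsto_const_nhds h0
  rw [sub_zero] at h3
  exact h3.congr fun N => (hps N).symm

lemma basel : HasSum (fun n : ℕ => 1 / ((n : ℝ) + 1) ^ 2) (Real.pi ^ 2 / 6) := by
  have h : HasSum (fun n : ℕ => (1 : ℝ) / ((n : ℝ)) ^ 2)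
      (Real.pi ^ 2 / 6 + ∑ i ∈ Finset.range 1, (1 : ℝ) / ((i : ℝ)) ^ 2) := by
    simpa using hasSum_zeta_two
  have h2 := (hasSum_nat_add_iff (f := fun n : ℕ => (1 : ℝ) / ((n : ℝ)) ^ 2) 1).mpr h
  have e : (fun n : ℕ => 1 / ((n : ℝ) + 1) ^ 2) = fun n : ℕ => (1 : ℝ) / (((n + 1 : ℕ) : ℝ)) ^ 2 := by
    funext n; push_cast; ring
  rw [e]; exact h2

lemma lemB (N : ℕ) :
    ∑ m ∈ Finset.range N, H (m + 1) / ((m : ℝ) + 1) = (H N ^ 2 + zh 2 N) / 2 := by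
  induction N with
  | zero => simp [H, zh]
  | succ N ih =>
    rw [Finset.sum_range_succ, ih, H_succ, zh_succ]
    have hN : ((N : ℝ) + 1) ≠ 0 := by positivity
    field_simp
    ring

theorem stmt0 (k : ℕ) (hk : 0 < k) :
    ∑' n : ℕ, H (n + 1) / (((n : ℝ) + 1) * ((n : ℝ) + 1 + k)) =
      (1 / (k : ℝ)) * (H k ^ 2 / 2 + zh 2 k / 2 + Real.pi ^ 2 / 6 - H k / k) := by
  classical
  have hk' : (0 : ℝ) < k := Nat.cast_pos.mpr hk
  set f : ℕ → ℕ → ℝ := fun j n => if j ≤ n then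
      (1 / ((j : ℝ) + 1)) * (1 / (((n : ℝ) + 1) * ((n : ℝ) + 1 + k))) else 0 with hf
  have hf0 : ∀ j n, 0 ≤ f j n := by
    intro j n; simp only [hf]; split
    · positivity
    · exact le_rfl
  -- value of the inner sums over n, for fixed j
  set v : ℕ → ℝ := fun j => (1 / ((j : ℝ) + 1)) *
      ((1 / (k : ℝ)) * ∑ m ∈ Finset.range k, 1 / ((m : ℝ) + ((j : ℝ) + 1))) with hv
  have hsum_j : ∀ j : ℕ, HasSum (fun n => f j n) (v j) := by
    intro j
    have hA := (lemA ((j : ℝ) + 1) (by positivity) k hk).mul_left (1 / ((j : ℝ) + 1))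
    have hshift : (fun n : ℕ => f j (n + j)) = fun n : ℕ =>
        (1 / ((j : ℝ) + 1)) *
          (1 / (((n : ℝ) + ((j : ℝ) + 1)) * ((n : ℝ) + ((j : ℝ) + 1) + (k : ℝ)))) := by
      funext n
      have hle : j ≤ n + j := Nat.le_add_left j n
      simp only [hf]
      rw [if_pos hle]
      push_cast
      ring
    have h2 : HasSum (fun n : ℕ => f j (n + j)) (v j) := by
      rw [hshift, hv]
      exact hA
    have h3 := (hasSum_nat_add_iff (f := fun n => f j n) j).mp h2
    have hz : ∑ i ∈ Finset.range j, f j i = 0 := by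
      apply Finset.sum_eq_zero
      intro i hi
      simp only [hf]
      rw [if_neg]
      exact fun h => absurd (Finset.mem_range.mp hi) (Nat.not_lt.mpr h)
    rwa [hz, add_zero] at h3
  -- bound : v j ≤ (1/(j+1))^2
  have hvle : ∀ j : ℕ, v j ≤ (1 / ((j : ℝ) + 1)) ^ 2 := by
    intro j
    have hb : ∑ m ∈ Finset.range k, 1 / ((m : ℝ) + ((j : ℝ) + 1))
        ≤ ∑ _m ∈ Finset.range k, 1 / ((j : ℝ) + 1) := by
      apply Finset.sum_le_sum
      intro m _
      apply one_div_le_one_div_of_le (by positivity)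
      have : (0 : ℝ) ≤ m := Nat.cast_nonneg m
      linarith
    have hb2 : (1 / (k : ℝ)) * ∑ m ∈ Finset.range k, 1 / ((m : ℝ) + ((j : ℝ) + 1))
        ≤ 1 / ((j : ℝ) + 1) := by
      rw [Finset.sum_const, Finset.card_range, nsmul_eq_mul] at hb
      have := mul_le_mul_of_nonneg_left hb (le_of_lt (one_div_pos.mpr hk'))
      calc (1 / (k : ℝ)) * ∑ m ∈ Finset.range k, 1 / ((m : ℝ) + ((j : ℝ) + 1))
          ≤ (1 / (k : ℝ)) * ((k : ℝ) * (1 / ((j : ℝ) + 1))) := this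
        _ = 1 / ((j : ℝ) + 1) := by field_simp
    calc v j ≤ (1 / ((j : ℝ) + 1)) * (1 / ((j : ℝ) + 1)) := by
          simp only [hv]
          exact mul_le_mul_of_nonneg_left hb2 (by positivity)
      _ = (1 / ((j : ℝ) + 1)) ^ 2 := by ring
  have hv0 : ∀ j : ℕ, 0 ≤ v j := by
    intro j
    simp only [hv]
    have : (0:ℝ) ≤ ∑ m ∈ Finset.range k, 1 / ((m : ℝ) + ((j : ℝ) + 1)) :=
      Finset.sum_nonneg fun m _ => by positivity
    positivity
  have hsq : Summable (fun j : ℕ => (1 / ((j : ℝ) + 1)) ^ 2) := by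
    have := basel.summable
    simpa [one_div, inv_pow] using this
  have hvsum : Summable v := Summable.of_nonneg_of_le hv0 hvle hsq
  have hF : Summable (Function.uncurry f) := by
    refine (summable_prod_of_nonneg ?_).mpr ⟨fun j => (hsum_j j).summable, ?_⟩
    · exact fun p => hf0 p.1 p.2
    · exact hvsum.congr fun j => ((hsum_j j).tsum_eq).symm
  -- rewrite each term of the LHS as a tsum over j
  have step1 : ∀ n : ℕ, ∑' j, f j n = H (n + 1) / (((n : ℝ) + 1) * ((n : ℝ) + 1 + k)) := by
    intro n
    rw [tsum_eq_sum (s := Finset.range (n + 1)) (f := fun j => f j n)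
      (fun j hj => by
        simp only [hf]
        rw [if_neg]
        exact fun h => hj (Finset.mem_range.mpr (Nat.lt_succ_of_le h)))]
    have he : ∀ j ∈ Finset.range (n + 1),
        f j n = (1 / ((j : ℝ) + 1)) * (1 / (((n : ℝ) + 1) * ((n : ℝ) + 1 + k))) := by
      intro j hj
      simp only [hf]
      rw [if_pos (Nat.lt_succ_iff.mp (Finset.mem_range.mp hj))]
    rw [Finset.sum_congr rfl he, ← Finset.sum_mul, ← H_eq]
    ring
  have main : ∑' n : ℕ, H (n + 1) / (((n : ℝ) + 1) * ((n : ℝ) + 1 + k)) = ∑' j, v j := by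
    calc ∑' n : ℕ, H (n + 1) / (((n : ℝ) + 1) * ((n : ℝ) + 1 + k))
        = ∑' (n : ℕ) (j : ℕ), f j n := tsum_congr fun n => (step1 n).symm
      _ = ∑' (j : ℕ) (n : ℕ), f j n := hF.tsum_comm
      _ = ∑' j, v j := tsum_congr fun j => (hsum_j j).tsum_eq
  -- now compute ∑' j, v j
  set w : ℕ → ℕ → ℝ := fun m j =>
      (1 / (k : ℝ)) * ((1 / ((j : ℝ) + 1)) * (1 / ((m : ℝ) + ((j : ℝ) + 1)))) with hw
  have hvw : ∀ j : ℕ, v j = ∑ m ∈ Finset.range k, w m j := by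
    intro j
    simp only [hv, hw, Finset.mul_sum]
    refine Finset.sum_congr rfl fun m _ => ?_
    ring
  -- HasSum over j of w m for each m < k
  have hwm : ∀ m : ℕ, m ∈ Finset.range k → HasSum (fun j : ℕ => w m j)
      (if m = 0 then (1 / (k : ℝ)) * (Real.pi ^ 2 / 6)
        else (1 / (k : ℝ)) * ((1 / (m : ℝ)) * H m)) := by
    intro m _
    by_cases hm : m = 0
    · subst hm
      rw [if_pos rfl]
      have hB := basel.mul_left (1 / (k : ℝ))
      have he : (fun j : ℕ => (1 / (k : ℝ)) * (1 / ((j : ℝ) + 1) ^ 2))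
          = fun j => w 0 j := by
        funext j
        simp only [hw]
        have hj : ((j : ℝ) + 1) ≠ 0 := by positivity
        push_cast
        field_simp
        ring
      rw [← he]
      exact hB
    · rw [if_neg hm]
      have hmpos : 0 < m := Nat.pos_of_ne_zero hm
      have hA := (lemA 1 one_pos m hmpos).mul_left (1 / (k : ℝ))
      have he : (fun j : ℕ => (1 / (k : ℝ)) * (1 / (((j : ℝ) + 1) * ((j : ℝ) + 1 + (m : ℝ)))))
          = fun j => w m j := by
        funext j
        simp only [hw]
        have hj : ((j : ℝ) + 1) ≠ 0 := by positivity
        have hjm : ((j : ℝ) + 1 + (m : ℝ)) ≠ 0 := by positivity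
        have hjm' : ((m : ℝ) + ((j : ℝ) + 1)) ≠ 0 := by positivity
        field_simp
        ring
      have hval : (1 / (k : ℝ)) * ((1 / (m : ℝ)) * ∑ i ∈ Finset.range m, 1 / ((i : ℝ) + 1))
          = (1 / (k : ℝ)) * ((1 / (m : ℝ)) * H m) := by rw [← H_eq]
      rw [← he, ← hval]
      exact hA
  have hsumv : ∑' j, v j = ∑ m ∈ Finset.range k,
      (if m = 0 then (1 / (k : ℝ)) * (Real.pi ^ 2 / 6)
        else (1 / (k : ℝ)) * ((1 / (m : ℝ)) * H m)) := by
    calc ∑' j, v j = ∑' j, ∑ m ∈ Finset.range k, w m j := tsum_congr hvw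
      _ = ∑ m ∈ Finset.range k, ∑' j, w m j :=
          Summable.tsum_finsetSum (fun m hm => (hwm m hm).summable)
      _ = _ := Finset.sum_congr rfl fun m hm => (hwm m hm).tsum_eq
  rw [main, hsumv]
  obtain ⟨K, rfl⟩ : ∃ K, k = K + 1 := ⟨k - 1, (Nat.succ_pred_eq_of_pos hk).symm⟩
  rw [Finset.sum_range_succ']
  have hterm : ∀ m ∈ Finset.range K,
      (if m + 1 = 0 then (1 / ((K + 1 : ℕ) : ℝ)) * (Real.pi ^ 2 / 6)
        else (1 / ((K + 1 : ℕ) : ℝ)) * ((1 / ((m + 1 : ℕ) : ℝ)) * H (m + 1)))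
      = (1 / ((K + 1 : ℕ) : ℝ)) * (H (m + 1) / ((m : ℝ) + 1)) := by
    intro m _
    rw [if_neg (Nat.succ_ne_zero m)]
    push_cast
    ring
  rw [Finset.sum_congr rfl hterm, ← Finset.mul_sum, lemB, if_pos rfl]
  have hc : ((K + 1 : ℕ) : ℝ) = (K : ℝ) + 1 := by push_cast; ring
  rw [hc, H_succ, zh_succ]
  have hK : ((K : ℝ) + 1) ≠ 0 := by positivity
  field_simp
  ring
end

section
/- For positive integers $m$ and $k$, $\sum_{n=1}^{\infty} \frac{\zeta_n(m)}{n(n+k)} = \frac{1}{k}\left\{ \zeta(m+1) + \sum_{j=1}^{m-1} (-1)^{j-1}\zeta(m+1-j)\,\zeta_{k-1}(j) + (-1)^{m-1}\sum_{i=1}^{k-1} \frac{H_i}{i^m} \right\}$. -/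
open Finset Filter

noncomputable def Z (s : ℕ) : ℝ := ∑' n : ℕ, 1 / ((n : ℝ) + 1) ^ s



lemma sumsq : Summable (fun n : ℕ => 1 / ((n:ℝ)+1)^2) := by
  have h := (summable_nat_add_iff 1).mpr (Real.summable_one_div_nat_pow.mpr (le_refl 2))
  apply h.congr
  intro n
  push_cast
  ring

lemma Vsummable (m K : ℕ) (hm : 1 ≤ m) :
    Summable (fun n : ℕ => 1 / (((n:ℝ)+1)^m * ((n:ℝ)+1+K))) := by
  apply Summable.of_nonneg_of_le (fun n => by positivity) _ sumsq
  intro n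
  apply one_div_le_one_div_of_le (by positivity)
  have h1 : ((n:ℝ)+1)^1 ≤ ((n:ℝ)+1)^m := pow_le_pow_right₀ (by norm_num) hm
  have h2 : ((n:ℝ)+1) ≤ ((n:ℝ)+1+K) := le_add_of_nonneg_right (Nat.cast_nonneg K)
  calc ((n:ℝ)+1)^2 = ((n:ℝ)+1)^1 * ((n:ℝ)+1) := by ring
    _ ≤ ((n:ℝ)+1)^m * ((n:ℝ)+1+K) := by
        apply mul_le_mul h1 h2 (by positivity) (by positivity)

lemma Zsummable (s : ℕ) (hs : 2 ≤ s) : Summable (fun n : ℕ => 1 / ((n:ℝ)+1)^s) := by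
  apply Summable.of_nonneg_of_le (fun n => by positivity) _ sumsq
  intro n
  apply one_div_le_one_div_of_le (by positivity)
  exact pow_le_pow_right₀ (by norm_num) hs

lemma tele_partial (g : ℕ → ℝ) (K N : ℕ) :
    ∑ n ∈ range N, (g n - g (n+K)) = ∑ d ∈ range K, g d - ∑ d ∈ range K, g (N+d) := by
  rw [Finset.sum_sub_distrib]
  have h1 : ∑ n ∈ range N, g n + ∑ n ∈ Ico N (N+K), g n = ∑ n ∈ range (N+K), g n := by
    simp only [range_eq_Ico]
    exact Finset.sum_Ico_consecutive g (Nat.zero_le N) (Nat.le_add_right N K)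
  have h2 : ∑ n ∈ range K, g n + ∑ n ∈ Ico K (K+N), g n = ∑ n ∈ range (K+N), g n := by
    simp only [range_eq_Ico]
    exact Finset.sum_Ico_consecutive g (Nat.zero_le K) (Nat.le_add_right K N)
  have h3 : ∑ n ∈ range N, g (n+K) = ∑ n ∈ Ico K (K+N), g n := by
    rw [Finset.sum_Ico_eq_sum_range]
    simp [add_comm, Nat.add_sub_cancel_left]
  have h4 : ∑ d ∈ range K, g (N+d) = ∑ n ∈ Ico N (N+K), g n := by
    rw [Finset.sum_Ico_eq_sum_range]
    simp [Nat.add_sub_cancel_left]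
  rw [h3, h4, Nat.add_comm N K] at *
  linarith [h1, h2]

lemma tele (g : ℕ → ℝ) (K : ℕ) (hg : Filter.Tendsto g atTop (nhds 0))
    (hs : Summable (fun n => g n - g (n+K))) :
    ∑' n : ℕ, (g n - g (n+K)) = ∑ d ∈ range K, g d := by
  refine ((hs.hasSum_iff_tendsto_nat).mpr ?_).tsum_eq
  simp_rw [tele_partial g K]
  have h0 : Filter.Tendsto (fun N => ∑ d ∈ range K, g (N+d)) atTop (nhds 0) := by
    have : Filter.Tendsto (fun N => ∑ d ∈ range K, g (N+d)) atTop
        (nhds (∑ d ∈ range K, (0:ℝ))) := by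
      apply tendsto_finset_sum
      intro d _
      exact hg.comp (Filter.tendsto_add_atTop_nat d)
    simpa using this
  simpa using tendsto_const_nhds.sub h0

lemma tele_inv_summable (c : ℝ) (hc : 1 ≤ c) (K : ℕ) :
    Summable (fun t : ℕ => (1:ℝ)/(c+t) - 1/(c+t+K)) := by
  have hc0 : (0:ℝ) < c := lt_of_lt_of_le zero_lt_one hc
  have hbig : Summable (fun t : ℕ => (K:ℝ) * (1 / ((t:ℝ)+1)^2)) := sumsq.mul_left (K:ℝ)
  refine Summable.of_nonneg_of_le ?_ ?_ hbig
  · intro t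
    have h1 : (0:ℝ) < c + t := by positivity
    have h2 : c + t ≤ c + t + K := le_add_of_nonneg_right (Nat.cast_nonneg K)
    have := one_div_le_one_div_of_le h1 h2
    linarith
  · intro t
    have h1 : (0:ℝ) < c + t := by positivity
    have h2 : (0:ℝ) < c + t + K := by positivity
    have key : (1:ℝ)/(c+t) - 1/(c+t+K) = K/((c+t)*(c+t+K)) := by
      field_simp
      ring
    rw [key]
    have h3 : ((t:ℝ)+1)*((t:ℝ)+1) ≤ (c+t)*(c+t+K) := by
      have e1 : (t:ℝ)+1 ≤ c+t := by linarith
      have e2 : (t:ℝ)+1 ≤ c+t+K := by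
        have : (0:ℝ) ≤ K := Nat.cast_nonneg K
        linarith
      exact mul_le_mul e1 e2 (by positivity) (by positivity)
    calc (K:ℝ)/((c+t)*(c+t+K)) ≤ (K:ℝ)/(((t:ℝ)+1)*((t:ℝ)+1)) := by
          apply div_le_div_of_nonneg_left (Nat.cast_nonneg K) (by positivity) h3
      _ = (K:ℝ) * (1/((t:ℝ)+1)^2) := by ring

lemma tele_inv (c : ℝ) (hc : 1 ≤ c) (K : ℕ) :
    ∑' t : ℕ, ((1:ℝ)/(c+t) - 1/(c+t+K)) = ∑ d ∈ range K, 1/(c+d) := by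
  have hc0 : (0:ℝ) < c := lt_of_lt_of_le zero_lt_one hc
  have hG : ∀ t : ℕ, (fun t : ℕ => (1:ℝ)/(c+t)) (t + K) = 1/(c+t+K) := by
    intro t
    push_cast
    ring_nf
  have hg : Filter.Tendsto (fun t : ℕ => (1:ℝ)/(c+t)) atTop (nhds 0) := by
    simp only [one_div]
    apply Filter.Tendsto.inv_tendsto_atTop
    apply Filter.tendsto_atTop_add_const_left
    exact tendsto_natCast_atTop_atTop
  have := tele (fun t : ℕ => (1:ℝ)/(c+t)) K hg
    (by
      apply (tele_inv_summable c hc K).congr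
      intro t
      push_cast
      ring)
  rw [← this]
  apply tsum_congr
  intro t
  push_cast
  ring

noncomputable def Vv (m K : ℕ) : ℝ := ∑' n : ℕ, 1 / (((n:ℝ)+1)^m * ((n:ℝ)+1+K))

lemma Icc_one_sum (f : ℕ → ℝ) (n : ℕ) :
    ∑ j ∈ Finset.Icc 1 n, f j = ∑ d ∈ range n, f (1+d) := by
  rw [← Finset.Ico_add_one_right_eq_Icc, Finset.sum_Ico_eq_sum_range]
  simp

lemma Vv_zero (m : ℕ) : Vv m 0 = Z (m+1) := by
  unfold Vv Z
  apply tsum_congr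
  intro n
  rw [pow_succ]
  push_cast
  ring_nf

lemma Vv_one (K : ℕ) (hK : 1 ≤ K) : Vv 1 K = H K / K := by
  have hK0 : (K:ℝ) ≠ 0 := Nat.cast_ne_zero.mpr (by omega)
  unfold Vv
  have h1 : ∀ n : ℕ, 1 / (((n:ℝ)+1)^1 * ((n:ℝ)+1+K)) =
      (1/(K:ℝ)) * ((1:ℝ)/(1+(n:ℝ)) - 1/(1+(n:ℝ)+K)) := by
    intro n
    have hn : (0:ℝ) < (n:ℝ)+1 := by positivity
    have hn2 : (0:ℝ) < (n:ℝ)+1+K := by positivity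
    rw [pow_one]
    field_simp
    ring
  rw [tsum_congr h1, tsum_mul_left, tele_inv 1 le_rfl K]
  rw [H, Icc_one_sum (fun j => (1:ℝ)/j) K]
  have hs : (∑ d ∈ range K, (fun j : ℕ => (1:ℝ)/(j:ℝ)) (1+d)) = ∑ d ∈ range K, (1:ℝ)/(1+(d:ℝ)) := by
    apply Finset.sum_congr rfl
    intro d _
    push_cast
    ring
  rw [hs]
  ring

lemma Vv_rec (m K : ℕ) (hm : 1 ≤ m) (hK : 1 ≤ K) :
    Vv (m+1) K = (Z (m+1) - Vv m K) / K := by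
  have hK0 : (K:ℝ) ≠ 0 := Nat.cast_ne_zero.mpr (by omega)
  unfold Vv Z
  have h1 : ∀ n : ℕ, 1 / (((n:ℝ)+1)^(m+1) * ((n:ℝ)+1+K)) =
      (1/(K:ℝ)) * (1/((n:ℝ)+1)^(m+1) - 1/(((n:ℝ)+1)^m * ((n:ℝ)+1+K))) := by
    intro n
    have hn : (0:ℝ) < (n:ℝ)+1 := by positivity
    have hn2 : (0:ℝ) < (n:ℝ)+1+K := by positivity
    have hp : ((n:ℝ)+1)^m ≠ 0 := by positivity
    rw [pow_succ]
    field_simp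
    ring
  rw [tsum_congr h1, tsum_mul_left,
    Summable.tsum_sub (Zsummable (m+1) (by omega)) (Vsummable m K hm)]
  ring

lemma Vclosed' (m K : ℕ) (hK : 1 ≤ K) :
    Vv (m+1) K = ∑ j ∈ range m, (-1:ℝ)^j * Z (m+1-j) / (K:ℝ)^(j+1)
      + (-1:ℝ)^m * H K / (K:ℝ)^(m+1) := by
  have hK0 : (K:ℝ) ≠ 0 := Nat.cast_ne_zero.mpr (by omega)
  induction m with
  | zero => simp [Vv_one K hK]
  | succ m ih =>
    rw [Vv_rec (m+1) K (by omega) hK, ih, Finset.sum_range_succ']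
    have hshift : ∀ j ∈ range m, (-1:ℝ)^(j+1) * Z (m+1+1-(j+1)) / (K:ℝ)^(j+1+1)
        = (-(1:ℝ)/(K:ℝ)) * ((-1:ℝ)^j * Z (m+1-j) / (K:ℝ)^(j+1)) := by
      intro j hj
      have he : m+1+1-(j+1) = m+1-j := by omega
      rw [he]
      ring
    rw [Finset.sum_congr rfl hshift, ← Finset.mul_sum]
    simp only [pow_zero, one_mul, Nat.sub_zero]
    ring

lemma Vclosed (m K : ℕ) (hm : 1 ≤ m) (hK : 1 ≤ K) :
    Vv m K = ∑ j ∈ Finset.Icc 1 (m-1), (-1:ℝ)^(j-1) * Z (m+1-j) / (K:ℝ)^j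
      + (-1:ℝ)^(m-1) * H K / (K:ℝ)^m := by
  obtain ⟨M, rfl⟩ : ∃ M, m = M + 1 := ⟨m-1, by omega⟩
  rw [Vclosed' M K hK]
  congr 1
  · rw [Icc_one_sum (fun j => (-1:ℝ)^(j-1) * Z (M+1+1-j) / (K:ℝ)^j) (M+1-1)]
    simp only [Nat.add_sub_cancel]
    apply Finset.sum_congr rfl
    intro i hi
    have h1 : 1 + i - 1 = i := by omega
    have h2 : M + 1 + 1 - (1 + i) = M + 1 - i := by omega
    rw [h1, h2, add_comm 1 i]

theorem stmt1 (m k : ℕ) (hm : 0 < m) (hk : 0 < k) :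
    ∑' n : ℕ, zh m (n + 1) / (((n : ℝ) + 1) * ((n : ℝ) + 1 + k)) =
      (1 / (k : ℝ)) *
        (Z (m + 1) +
          ∑ j ∈ Finset.Icc 1 (m - 1), (-1 : ℝ) ^ (j - 1) * Z (m + 1 - j) * zh j (k - 1) +
          (-1 : ℝ) ^ (m - 1) * ∑ i ∈ Finset.Icc 1 (k - 1), H i / (i : ℝ) ^ m) := by
  have hk0 : (k:ℝ) ≠ 0 := Nat.cast_ne_zero.mpr (by omega)
  set a : ℕ × ℕ → ℝ := fun p =>
    (if p.1 ≤ p.2 then (1:ℝ)/((p.1:ℝ)+1)^m else 0) *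
      (1/(((p.2:ℝ)+1)*((p.2:ℝ)+1+(k:ℝ)))) with ha
  have hanonneg : ∀ p, 0 ≤ a p := by
    intro p
    apply mul_nonneg
    · split <;> positivity
    · positivity
  have hrow_summable : ∀ j : ℕ, Summable (fun n => a (j, n)) := by
    intro j
    refine Summable.of_nonneg_of_le (fun n => hanonneg _) (fun n => ?_) sumsq
    simp only [ha]
    have h2 : (0:ℝ) < ((n:ℝ)+1)*((n:ℝ)+1+(k:ℝ)) := by positivity
    have hif : (if j ≤ n then (1:ℝ)/((j:ℝ)+1)^m else 0) ≤ 1 := by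
      split
      · rw [div_le_one (by positivity)]
        exact one_le_pow₀ (by linarith [Nat.cast_nonneg (α := ℝ) j])
      · norm_num
    calc (if j ≤ n then (1:ℝ)/((j:ℝ)+1)^m else 0) * (1/(((n:ℝ)+1)*((n:ℝ)+1+(k:ℝ))))
        ≤ 1 * (1/(((n:ℝ)+1)*((n:ℝ)+1+(k:ℝ)))) := by
          apply mul_le_mul_of_nonneg_right hif (by positivity)
      _ ≤ 1/((n:ℝ)+1)^2 := by
          rw [one_mul]
          apply one_div_le_one_div_of_le (by positivity)
          nlinarith [Nat.cast_nonneg (α := ℝ) n, Nat.cast_nonneg (α := ℝ) k]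
  have hrow_val : ∀ j : ℕ, ∑' n, a (j, n) =
      (1/((j:ℝ)+1)^m) * ((1/(k:ℝ)) * ∑ d ∈ range k, 1/((j:ℝ)+1+(d:ℝ))) := by
    intro j
    have hc : (1:ℝ) ≤ (j:ℝ)+1 := by linarith [Nat.cast_nonneg (α := ℝ) j]
    rw [← Summable.sum_add_tsum_nat_add j (hrow_summable j)]
    have hz : ∑ i ∈ range j, a (j, i) = 0 := by
      apply Finset.sum_eq_zero
      intro i hi
      simp only [ha]
      rw [if_neg (by simp only [mem_range] at hi; omega)]
      rw [zero_mul]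
    rw [hz, zero_add]
    have hpt : ∀ t : ℕ, a (j, t + j) =
        ((1/((j:ℝ)+1)^m) * (1/(k:ℝ))) * ((1:ℝ)/((j:ℝ)+1+(t:ℝ)) - 1/((j:ℝ)+1+(t:ℝ)+(k:ℝ))) := by
      intro t
      simp only [ha]
      rw [if_pos (Nat.le_add_left j t)]
      have h1 : (0:ℝ) < (t:ℝ)+(j:ℝ)+1 := by positivity
      have h1' : (0:ℝ) < (j:ℝ)+1+(t:ℝ) := by linarith
      have h2 : (0:ℝ) < (j:ℝ)+1+(t:ℝ)+(k:ℝ) := by positivity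
      have h3 : ((j:ℝ)+1)^m ≠ 0 := by positivity
      push_cast
      rw [div_sub_div _ _ h1'.ne' h2.ne']
      field_simp
      ring
    rw [tsum_congr hpt, tsum_mul_left, tele_inv ((j:ℝ)+1) hc k]
    ring
  have hS : ∀ j : ℕ, ∑ d ∈ range k, 1/((j:ℝ)+1+(d:ℝ)) ≤ (k:ℝ) * (1/((j:ℝ)+1)) := by
    intro j
    calc ∑ d ∈ range k, 1/((j:ℝ)+1+(d:ℝ)) ≤ ∑ _d ∈ range k, 1/((j:ℝ)+1) := by
          apply Finset.sum_le_sum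
          intro d _
          exact one_div_le_one_div_of_le (by positivity)
            (le_add_of_nonneg_right (Nat.cast_nonneg d))
      _ = (k:ℝ) * (1/((j:ℝ)+1)) := by
          rw [Finset.sum_const, card_range, nsmul_eq_mul]
  have hSnonneg : ∀ j : ℕ, (0:ℝ) ≤ ∑ d ∈ range k, 1/((j:ℝ)+1+(d:ℝ)) := by
    intro j
    apply Finset.sum_nonneg
    intro d _
    positivity
  have hrowsum_summable : Summable (fun j : ℕ => ∑' n, a (j, n)) := by
    refine Summable.of_nonneg_of_le (fun j => tsum_nonneg (fun n => hanonneg _))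
      (fun j => ?_) sumsq
    rw [hrow_val j]
    have h1 : (1:ℝ)/((j:ℝ)+1)^m ≤ 1/((j:ℝ)+1) := by
      apply one_div_le_one_div_of_le (by positivity)
      calc ((j:ℝ)+1) = ((j:ℝ)+1)^1 := (pow_one _).symm
        _ ≤ ((j:ℝ)+1)^m := pow_le_pow_right₀ (by linarith [Nat.cast_nonneg (α := ℝ) j]) hm
    have h2 : (1/(k:ℝ)) * ∑ d ∈ range k, 1/((j:ℝ)+1+(d:ℝ)) ≤ 1/((j:ℝ)+1) := by
      calc (1/(k:ℝ)) * ∑ d ∈ range k, 1/((j:ℝ)+1+(d:ℝ))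
          ≤ (1/(k:ℝ)) * ((k:ℝ) * (1/((j:ℝ)+1))) := by
            apply mul_le_mul_of_nonneg_left (hS j) (by positivity)
        _ = 1/((j:ℝ)+1) := by field_simp
    calc (1/((j:ℝ)+1)^m) * ((1/(k:ℝ)) * ∑ d ∈ range k, 1/((j:ℝ)+1+(d:ℝ)))
        ≤ (1/((j:ℝ)+1)) * (1/((j:ℝ)+1)) := by
          apply mul_le_mul h1 h2 (by positivity) (by positivity)
      _ = 1/((j:ℝ)+1)^2 := by rw [div_mul_div_comm, one_mul, ← pow_two]
  have hsummable : Summable a := by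
    apply (summable_prod_of_nonneg hanonneg).mpr
    exact ⟨hrow_summable, hrowsum_summable⟩
  have hcol_summable : ∀ n : ℕ, Summable (fun j => a (j, n)) := by
    intro n
    apply summable_of_ne_finset_zero (s := range (n+1))
    intro j hj
    simp only [mem_range] at hj
    simp only [ha]
    rw [if_neg (by omega), zero_mul]
  have hcol_val : ∀ n : ℕ, ∑' j, a (j, n) =
      zh m (n+1) * (1/(((n:ℝ)+1)*((n:ℝ)+1+(k:ℝ)))) := by
    intro n
    rw [tsum_eq_sum (s := range (n+1)) (by
      intro j hj
      simp only [mem_range] at hj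
      simp only [ha]
      rw [if_neg (by omega), zero_mul])]
    simp only [ha]
    rw [← Finset.sum_mul]
    congr 1
    rw [zh, Icc_one_sum (fun j => (1:ℝ)/(j:ℝ)^m) (n+1)]
    apply Finset.sum_congr rfl
    intro j hj
    simp only [mem_range] at hj
    rw [if_pos (by omega)]
    push_cast
    ring
  have key : ∑ d ∈ range k, Vv m d =
      Z (m+1) + (∑ j ∈ Finset.Icc 1 (m-1), (-1:ℝ)^(j-1) * Z (m+1-j) * zh j (k-1))
        + (-1:ℝ)^(m-1) * ∑ i ∈ Finset.Icc 1 (k-1), H i / (i:ℝ)^m := by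
    obtain ⟨K', rfl⟩ : ∃ K', k = K' + 1 := ⟨k-1, by omega⟩
    simp only [Nat.add_sub_cancel]
    rw [Finset.sum_range_succ', Vv_zero m]
    have h1 : ∑ d ∈ range K', Vv m (d+1) = ∑ i ∈ Finset.Icc 1 K', Vv m i := by
      rw [Icc_one_sum (Vv m) K']
      exact Finset.sum_congr rfl (fun d _ => by rw [add_comm])
    rw [h1]
    have h2 : ∑ i ∈ Finset.Icc 1 K', Vv m i =
        ∑ i ∈ Finset.Icc 1 K', ((∑ j ∈ Finset.Icc 1 (m-1), (-1:ℝ)^(j-1) * Z (m+1-j) / (i:ℝ)^j)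
          + (-1:ℝ)^(m-1) * H i / (i:ℝ)^m) := by
      apply Finset.sum_congr rfl
      intro i hi
      rw [Finset.mem_Icc] at hi
      exact Vclosed m i hm hi.1
    rw [h2, Finset.sum_add_distrib, Finset.sum_comm]
    have h3 : ∑ j ∈ Finset.Icc 1 (m-1), ∑ i ∈ Finset.Icc 1 K',
        (-1:ℝ)^(j-1) * Z (m+1-j) / (i:ℝ)^j
        = ∑ j ∈ Finset.Icc 1 (m-1), (-1:ℝ)^(j-1) * Z (m+1-j) * zh j K' := by
      apply Finset.sum_congr rfl
      intro j _
      rw [zh, Finset.mul_sum]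
      apply Finset.sum_congr rfl
      intro i _
      ring
    have h4 : ∑ i ∈ Finset.Icc 1 K', (-1:ℝ)^(m-1) * H i / (i:ℝ)^m
        = (-1:ℝ)^(m-1) * ∑ i ∈ Finset.Icc 1 K', H i / (i:ℝ)^m := by
      rw [Finset.mul_sum]
      apply Finset.sum_congr rfl
      intro i _
      ring
    rw [h3, h4]
    ring
  calc ∑' n : ℕ, zh m (n + 1) / (((n : ℝ) + 1) * ((n : ℝ) + 1 + k))
      = ∑' n : ℕ, ∑' j : ℕ, a (j, n) := by
        apply tsum_congr
        intro n
        rw [hcol_val n, mul_one_div]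
    _ = ∑' j : ℕ, ∑' n : ℕ, a (j, n) :=
        Summable.tsum_comm' hsummable hrow_summable hcol_summable
    _ = ∑' j : ℕ, ∑ d ∈ range k, (1/(k:ℝ)) * (1/(((j:ℝ)+1)^m * ((j:ℝ)+1+(d:ℝ)))) := by
        apply tsum_congr
        intro j
        rw [hrow_val j]
        simp only [Finset.mul_sum]
        exact Finset.sum_congr rfl (fun d _ => by
          simp only [one_div, mul_inv]
          ring)
    _ = ∑ d ∈ range k, ∑' j : ℕ, (1/(k:ℝ)) * (1/(((j:ℝ)+1)^m * ((j:ℝ)+1+(d:ℝ)))) := by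
        exact Summable.tsum_finsetSum (fun d _ => (Vsummable m d hm).mul_left _)
    _ = ∑ d ∈ range k, (1/(k:ℝ)) * Vv m d := by
        apply Finset.sum_congr rfl
        intro d _
        rw [tsum_mul_left]
        rfl
    _ = (1/(k:ℝ)) * ∑ d ∈ range k, Vv m d := by rw [Finset.mul_sum]
    _ = _ := by rw [key]
end

section
/- For positive integers $n$ and $q \geq 2$ and real $x$ with $|x| < 1$, $\int_0^x t^{n-1}\mathrm{Li}_q(t)\,dt = \sum_{i=1}^{q-1} (-1)^{i-1}\frac{x^n}{n^i}\mathrm{Li}_{q+1-i}(x) + \frac{(-1)^q}{n^q}\ln(1-x)(x^n - 1) - \frac{(-1)^q}{n^q}\sum_{k=1}^n \frac{x^k}{k}$. -/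
noncomputable def Li (m : ℕ) (x : ℝ) : ℝ := ∑' n : ℕ, x ^ (n + 1) / ((n : ℝ) + 1) ^ m

open Finset MeasureTheory intervalIntegral Real

lemma sum_Icc_one (f : ℕ → ℝ) (k : ℕ) :
    ∑ i ∈ Finset.Icc 1 k, f i = ∑ j ∈ Finset.range k, f (j + 1) := by
  induction k with
  | zero => simp
  | succ k ih => rw [Finset.sum_Icc_succ_top (by omega), ih, Finset.sum_range_succ]

lemma summable_geom_aux {x : ℝ} (hx : |x| < 1) : Summable (fun m : ℕ => |x| ^ (m + 1)) := by
  have := (summable_geometric_of_lt_one (abs_nonneg x) hx).mul_left |x|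
  simpa [pow_succ'] using this

lemma one_le_cast_pow (m q : ℕ) : (1 : ℝ) ≤ ((m : ℝ) + 1) ^ q :=
  one_le_pow₀ (le_add_of_nonneg_left m.cast_nonneg)

lemma Li_term_bound {x : ℝ} (hx : |x| < 1) (q m : ℕ) :
    ‖x ^ (m + 1) / ((m : ℝ) + 1) ^ q‖ ≤ |x| ^ (m + 1) := by
  rw [Real.norm_eq_abs, abs_div, abs_pow]
  apply div_le_self (by positivity)
  rw [abs_of_nonneg (by positivity)]
  exact one_le_cast_pow m q

lemma summable_Li {x : ℝ} (hx : |x| < 1) (q : ℕ) :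
    Summable (fun m : ℕ => x ^ (m + 1) / ((m : ℝ) + 1) ^ q) :=
  Summable.of_norm_bounded (summable_geom_aux hx) (Li_term_bound hx q)

lemma one_le_J_denom (n q m : ℕ) : (1 : ℝ) ≤ ((n : ℝ) + m + 1) * ((m : ℝ) + 1) ^ q := by
  have h1 : (1 : ℝ) ≤ (n : ℝ) + m + 1 := by
    have : (0:ℝ) ≤ (n:ℝ) + m := by positivity
    linarith
  have h2 := one_le_cast_pow m q
  nlinarith

lemma J_term_bound {x : ℝ} (hx : |x| < 1) (n q m : ℕ) :
    ‖x ^ (n + m + 1) / (((n : ℝ) + m + 1) * ((m : ℝ) + 1) ^ q)‖ ≤ |x| ^ (m + 1) := by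
  rw [Real.norm_eq_abs, abs_div, abs_pow]
  calc |x| ^ (n + m + 1) / |((n : ℝ) + m + 1) * ((m : ℝ) + 1) ^ q|
      ≤ |x| ^ (n + m + 1) := by
        apply div_le_self (by positivity)
        rw [abs_of_nonneg (by positivity)]
        exact one_le_J_denom n q m
    _ = |x| ^ n * |x| ^ (m + 1) := by rw [show n + m + 1 = n + (m + 1) by omega, pow_add]
    _ ≤ 1 * |x| ^ (m + 1) :=
        mul_le_mul_of_nonneg_right (pow_le_one₀ (abs_nonneg x) hx.le) (by positivity)
    _ = |x| ^ (m + 1) := one_mul _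

lemma summable_J {x : ℝ} (hx : |x| < 1) (n q : ℕ) :
    Summable (fun m : ℕ => x ^ (n + m + 1) / (((n : ℝ) + m + 1) * ((m : ℝ) + 1) ^ q)) :=
  Summable.of_norm_bounded (summable_geom_aux hx) (J_term_bound hx n q)

noncomputable def Jf (n q : ℕ) (x : ℝ) : ℝ :=
  ∑' m : ℕ, x ^ (n + m + 1) / (((n : ℝ) + m + 1) * ((m : ℝ) + 1) ^ q)

/-- The integral equals the termwise sum. -/
lemma integral_eq_J {x : ℝ} (hx : |x| < 1) (n : ℕ) (hn : 1 ≤ n) (q : ℕ) :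
    ∫ t in (0:ℝ)..x, t ^ (n - 1) * Li q t = Jf n q x := by
  set F : ℕ → C(ℝ, ℝ) := fun m =>
    ⟨fun t => t ^ (n - 1) * (t ^ (m + 1) / ((m : ℝ) + 1) ^ q), by fun_prop⟩ with hF
  have hsum : Summable fun m : ℕ =>
      ‖(F m).restrict (↑(⟨Set.uIcc 0 x, isCompact_uIcc⟩ : TopologicalSpace.Compacts ℝ))‖ := by
    apply Summable.of_nonneg_of_le (fun m => norm_nonneg _) _ (summable_geom_aux hx)
    intro m
    rw [ContinuousMap.norm_le _ (by positivity)]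
    rintro ⟨t, ht⟩
    simp only [TopologicalSpace.Compacts.coe_mk] at ht
    have htx : |t| ≤ |x| := by
      rw [Set.mem_uIcc] at ht
      rw [abs_le]
      rcases ht with ⟨h1, h2⟩ | ⟨h1, h2⟩
      · constructor <;> [linarith [abs_nonneg x]; linarith [le_abs_self x]]
      · constructor <;> [linarith [neg_abs_le x]; linarith [abs_nonneg x]]
    simp only [ContinuousMap.restrict_apply, hF, ContinuousMap.coe_mk]
    rw [Real.norm_eq_abs, abs_mul, abs_div, abs_pow, abs_pow]
    have e1 : |t| ^ (n - 1) ≤ 1 := pow_le_one₀ (abs_nonneg t) (htx.trans hx.le)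
    have e2 : |t| ^ (m + 1) / |((m : ℝ) + 1) ^ q| ≤ |x| ^ (m + 1) := by
      calc |t| ^ (m + 1) / |((m : ℝ) + 1) ^ q| ≤ |t| ^ (m + 1) := by
            apply div_le_self (by positivity)
            rw [abs_of_nonneg (by positivity)]; exact one_le_cast_pow m q
        _ ≤ |x| ^ (m + 1) := pow_le_pow_left₀ (abs_nonneg t) htx _
    calc |t| ^ (n - 1) * (|t| ^ (m + 1) / |((m : ℝ) + 1) ^ q|)
        ≤ 1 * (|x| ^ (m + 1)) := mul_le_mul e1 e2 (by positivity) zero_le_one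
      _ = |x| ^ (m + 1) := one_mul _
  have key := intervalIntegral.hasSum_intervalIntegral_of_summable_norm (a := 0) (b := x) hsum
  have heq1 : ∀ t : ℝ, ∑' m : ℕ, (F m) t = t ^ (n - 1) * Li q t := by
    intro t
    simp only [hF, ContinuousMap.coe_mk, Li]
    exact tsum_mul_left
  have heq2 : ∀ m : ℕ, (∫ t in (0:ℝ)..x, (F m) t)
      = x ^ (n + m + 1) / (((n : ℝ) + m + 1) * ((m : ℝ) + 1) ^ q) := by
    intro m
    simp only [hF, ContinuousMap.coe_mk]
    have hnm : ∀ t : ℝ, t ^ (n - 1) * (t ^ (m + 1) / ((m : ℝ) + 1) ^ q)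
        = t ^ (n + m) / ((m : ℝ) + 1) ^ q := by
      intro t
      rw [mul_div_assoc', ← pow_add]
      congr 2
      omega
    simp only [hnm]
    rw [intervalIntegral.integral_div, integral_pow,
      zero_pow (show n + m + 1 ≠ 0 by omega), sub_zero, div_div]
    push_cast
    ring
  calc ∫ t in (0:ℝ)..x, t ^ (n - 1) * Li q t
      = ∫ t in (0:ℝ)..x, ∑' m : ℕ, (F m) t := by simp only [heq1]
    _ = ∑' m : ℕ, ∫ t in (0:ℝ)..x, (F m) t := key.tsum_eq.symm
    _ = Jf n q x := tsum_congr heq2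

lemma Li_one {x : ℝ} (hx : |x| < 1) : Li 1 x = -Real.log (1 - x) := by
  rw [Li, ← (Real.hasSum_pow_div_log_of_abs_lt_one hx).tsum_eq]
  exact tsum_congr fun m => by rw [pow_one]

lemma Jf_zero {x : ℝ} (hx : |x| < 1) (n : ℕ) :
    Jf n 0 x = -Real.log (1 - x) - ∑ k ∈ Finset.Icc 1 n, x ^ k / (k : ℝ) := by
  have hlog := Real.hasSum_pow_div_log_of_abs_lt_one hx
  have hadd := Summable.sum_add_tsum_nat_add (f := fun j : ℕ => x ^ (j + 1) / ((j : ℝ) + 1)) n hlog.summable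
  have h1 : ∑' i : ℕ, x ^ (i + n + 1) / ((i : ℝ) + n + 1) = Jf n 0 x := by
    rw [Jf]
    apply tsum_congr
    intro m
    rw [show m + n + 1 = n + m + 1 by omega]
    push_cast
    ring_nf
  have h2 : ∑ j ∈ Finset.range n, x ^ (j + 1) / ((j : ℝ) + 1)
      = ∑ k ∈ Finset.Icc 1 n, x ^ k / (k : ℝ) := by
    rw [sum_Icc_one (fun k => x ^ k / (k : ℝ)) n]
    exact Finset.sum_congr rfl fun j _ => by push_cast; ring
  rw [hlog.tsum_eq] at hadd
  rw [← h1, ← h2]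
  push_cast at hadd ⊢
  linarith [hadd]

lemma Jf_succ {x : ℝ} (hx : |x| < 1) (n : ℕ) (hn : 1 ≤ n) (q : ℕ) :
    Jf n (q + 1) x = x ^ n / n * Li (q + 1) x - 1 / n * Jf n q x := by
  have hn0 : (n : ℝ) ≠ 0 := Nat.cast_ne_zero.mpr (by omega)
  have hpt : ∀ m : ℕ, x ^ (n + m + 1) / (((n : ℝ) + m + 1) * ((m : ℝ) + 1) ^ (q + 1))
      = x ^ n / n * (x ^ (m + 1) / ((m : ℝ) + 1) ^ (q + 1))
        - 1 / n * (x ^ (n + m + 1) / (((n : ℝ) + m + 1) * ((m : ℝ) + 1) ^ q)) := by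
    intro m
    have hm : ((m : ℝ) + 1) ≠ 0 := by positivity
    have hA : ((n : ℝ) + m + 1) ≠ 0 := by positivity
    field_simp
    ring
  have s1 : Summable fun m : ℕ => x ^ n / n * (x ^ (m + 1) / ((m : ℝ) + 1) ^ (q + 1)) :=
    (summable_Li hx (q + 1)).mul_left _
  have s2 : Summable fun m : ℕ =>
      1 / n * (x ^ (n + m + 1) / (((n : ℝ) + m + 1) * ((m : ℝ) + 1) ^ q)) :=
    (summable_J hx n q).mul_left _
  calc Jf n (q + 1) x
      = ∑' m : ℕ, (x ^ n / n * (x ^ (m + 1) / ((m : ℝ) + 1) ^ (q + 1))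
          - 1 / n * (x ^ (n + m + 1) / (((n : ℝ) + m + 1) * ((m : ℝ) + 1) ^ q))) :=
        tsum_congr hpt
    _ = x ^ n / n * Li (q + 1) x - 1 / n * Jf n q x := by
        rw [Summable.tsum_sub s1 s2, tsum_mul_left, tsum_mul_left, Li, Jf]

lemma Jf_closed (n : ℕ) (hn : 1 ≤ n) {x : ℝ} (hx : |x| < 1) (p : ℕ) :
    Jf n (p + 1) x = ∑ i ∈ Finset.Icc 1 p, (-1 : ℝ) ^ (i - 1) * (x ^ n / (n : ℝ) ^ i) * Li (p + 2 - i) x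
      + (-1 : ℝ) ^ (p + 1) / (n : ℝ) ^ (p + 1) * Real.log (1 - x) * (x ^ n - 1)
      - (-1 : ℝ) ^ (p + 1) / (n : ℝ) ^ (p + 1) * ∑ k ∈ Finset.Icc 1 n, x ^ k / (k : ℝ) := by
  have hn0 : (n : ℝ) ≠ 0 := Nat.cast_ne_zero.mpr (by omega)
  induction p with
  | zero =>
      rw [Jf_succ hx n hn 0, Jf_zero hx n, Li_one hx]
      norm_num
      field_simp
      ring
  | succ p ih =>
      rw [Jf_succ hx n hn (p + 1), ih]
      rw [sum_Icc_one (fun i => (-1 : ℝ) ^ (i - 1) * (x ^ n / (n : ℝ) ^ i) * Li (p + 1 + 2 - i) x) (p + 1),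
        Finset.sum_range_succ',
        sum_Icc_one (fun i => (-1 : ℝ) ^ (i - 1) * (x ^ n / (n : ℝ) ^ i) * Li (p + 2 - i) x) p]
      have e1 : ∀ j : ℕ, p + 2 - (j + 1) = p + 1 - j := fun j => by omega
      have e2 : ∀ k : ℕ, p + 1 + 2 - (k + 1 + 1) = p + 1 - k := fun k => by omega
      have e3 : p + 1 + 2 - (0 + 1) = p + 1 + 1 := by omega
      simp only [e1, e2, e3, Nat.add_sub_cancel]
      have hterm : ∑ k ∈ Finset.range p,
            (-1 : ℝ) ^ (k + 1) * (x ^ n / (n : ℝ) ^ (k + 1 + 1)) * Li (p + 1 - k) x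
          = -(1 / n) * ∑ j ∈ Finset.range p,
            (-1 : ℝ) ^ j * (x ^ n / (n : ℝ) ^ (j + 1)) * Li (p + 1 - j) x := by
        rw [Finset.mul_sum]
        refine Finset.sum_congr rfl fun j _ => ?_
        field_simp
        ring
      rw [hterm]
      field_simp
      ring

theorem stmt9 (n q : ℕ) (hn : 1 ≤ n) (hq : 2 ≤ q) (x : ℝ) (hx : |x| < 1) :
    ∫ t in (0 : ℝ)..x, t ^ (n - 1) * Li q t =
      ∑ i ∈ Finset.Icc 1 (q - 1), (-1 : ℝ) ^ (i - 1) * (x ^ n / (n : ℝ) ^ i) * Li (q + 1 - i) x +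
        (-1 : ℝ) ^ q / (n : ℝ) ^ q * Real.log (1 - x) * (x ^ n - 1) -
        (-1 : ℝ) ^ q / (n : ℝ) ^ q * ∑ k ∈ Finset.Icc 1 n, x ^ k / (k : ℝ) := by
  obtain ⟨p, rfl⟩ : ∃ p, q = p + 1 := ⟨q - 1, by omega⟩
  rw [integral_eq_J hx n hn (p + 1), Jf_closed n hn hx p]
  have e1 : ∀ i : ℕ, p + 1 + 1 - i = p + 2 - i := fun i => by omega
  simp only [e1, Nat.add_sub_cancel]
end

section
/- For integers $n \geq 1$ and $k \geq 0$, $\int_0^1 t^{n-1}\ln^k(1-t)\,dt = (-1)^k \frac{Y_k(n)}{n}$, where $Y_k(n)$ is defined recursively by $Y_0(n) = 1$ and $Y_k(n) = k\sum_{m=1}^n \frac{Y_{k-1}(m)}{m}$. -/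
open Real MeasureTheory Filter Set intervalIntegral Topology

lemma tendsto_mul_log_pow (k : ℕ) :
    Tendsto (fun x : ℝ => x * Real.log x ^ k) (𝓝[>] (0:ℝ)) (𝓝 0) := by
  rcases Nat.eq_zero_or_pos k with rfl | hk
  · simp only [pow_zero, mul_one]; exact (tendsto_id.mono_left nhdsWithin_le_nhds :
      Tendsto (fun x : ℝ => x) (𝓝[>] (0:ℝ)) (𝓝 0))
  · have h := (tendsto_log_mul_rpow_nhdsGT_zero (show (0:ℝ) < 1/k by positivity)).pow k
    rw [zero_pow hk.ne'] at h
    refine Tendsto.congr' ?_ h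
    filter_upwards [self_mem_nhdsWithin] with x (hx : x ∈ Ioi (0:ℝ))
    rw [mul_pow, ← Real.rpow_natCast (x ^ ((1:ℝ)/k)) k, ← Real.rpow_mul (le_of_lt hx),
      one_div, inv_mul_cancel₀ (by exact_mod_cast hk.ne' : (k:ℝ) ≠ 0), Real.rpow_one, mul_comm]

lemma intervalIntegrable_log_pow (k : ℕ) :
    IntervalIntegrable (fun t : ℝ => Real.log t ^ k) volume 0 1 := by
  rcases Nat.eq_zero_or_pos k with rfl | hk
  · simpa using (intervalIntegrable_const : IntervalIntegrable (fun _ : ℝ => (1:ℝ)) volume 0 1)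
  · have hb : IntervalIntegrable (fun t : ℝ => ((2*k : ℝ))^k * t ^ (-(1/2) : ℝ)) volume 0 1 :=
      (intervalIntegral.intervalIntegrable_rpow' (by norm_num)).const_mul _
    refine hb.mono_fun ((Real.measurable_log.pow_const k).aestronglyMeasurable.restrict) ?_
    rw [uIoc_of_le (by norm_num : (0:ℝ) ≤ 1)]
    refine (ae_restrict_iff' measurableSet_Ioc).2 (ae_of_all _ fun t ht => ?_)
    obtain ⟨ht0, ht1⟩ := ht
    have hk0 : (0:ℝ) < 2*k := by positivity
    have hlog : |Real.log t| = Real.log t⁻¹ := by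
      rw [Real.log_inv, abs_of_nonpos (Real.log_nonpos ht0.le ht1)]
    have h2 : Real.log t⁻¹ ≤ (2*k) * (t⁻¹) ^ ((1:ℝ)/(2*k)) := by
      have h := Real.log_le_rpow_div (inv_nonneg.2 ht0.le) (show (0:ℝ) < 1/(2*k) by positivity)
      rw [div_div_eq_mul_div, div_one] at h
      linarith [h]
    have h3 : ((2*k:ℝ) * (t⁻¹) ^ ((1:ℝ)/(2*k)))^k = (2*k:ℝ)^k * t ^ (-(1/2) : ℝ) := by
      rw [mul_pow, ← Real.rpow_natCast ((t⁻¹) ^ ((1:ℝ)/(2*k))) k,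
        ← Real.rpow_mul (inv_nonneg.2 ht0.le)]
      have : (1:ℝ)/(2*k) * k = 1/2 := by
        field_simp
      rw [this, Real.inv_rpow ht0.le, ← Real.rpow_neg ht0.le]
    have hnn : 0 ≤ Real.log t⁻¹ := Real.log_nonneg ((one_le_inv₀ ht0).2 ht1)
    calc ‖Real.log t ^ k‖ = |Real.log t|^k := by rw [Real.norm_eq_abs, abs_pow]
      _ = (Real.log t⁻¹)^k := by rw [hlog]
      _ ≤ ((2*k:ℝ) * (t⁻¹) ^ ((1:ℝ)/(2*k)))^k := pow_le_pow_left₀ hnn h2 k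
      _ = (2*k:ℝ)^k * t ^ (-(1/2) : ℝ) := h3
      _ ≤ ‖(2*k:ℝ)^k * t ^ (-(1/2) : ℝ)‖ := le_abs_self _

lemma intervalIntegrable_g (m k : ℕ) :
    IntervalIntegrable (fun t : ℝ => t ^ m * Real.log (1-t) ^ k) volume 0 1 := by
  have h1 : IntervalIntegrable (fun t : ℝ => Real.log (1-t) ^ k) volume 0 1 := by
    have h := ((intervalIntegrable_log_pow k).comp_sub_left 1).symm
    norm_num at h
    exact h
  refine h1.mono_fun ?_ ?_
  · exact ((measurable_id.pow_const m).mul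
      ((Real.measurable_log.comp (measurable_const.sub measurable_id)).pow_const k)
      ).aestronglyMeasurable.restrict
  · rw [uIoc_of_le (by norm_num : (0:ℝ) ≤ 1)]
    refine (ae_restrict_iff' measurableSet_Ioc).2 (ae_of_all _ fun t ht => ?_)
    obtain ⟨ht0, ht1⟩ := ht
    simp only [Real.norm_eq_abs, abs_mul]
    have : |t ^ m| ≤ 1 := by
      rw [abs_pow, abs_of_pos ht0]
      exact pow_le_one₀ ht0.le ht1
    nlinarith [abs_nonneg (Real.log (1-t) ^ k), abs_nonneg (t ^ m)]

lemma tendsto_primitive {f : ℝ → ℝ} (hf : IntervalIntegrable f volume 0 1) :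
    Tendsto (fun b => ∫ t in (0:ℝ)..b, f t) (𝓝[<] (1:ℝ))
      (𝓝 (∫ t in (0:ℝ)..1, f t)) := by
  have hc : ContinuousOn (fun b => ∫ t in (0:ℝ)..b, f t) (Set.uIcc 0 1) :=
    continuousOn_primitive_interval' hf Set.left_mem_uIcc
  have h1 : Tendsto (fun b => ∫ t in (0:ℝ)..b, f t) (𝓝[Set.uIcc (0:ℝ) 1] 1)
      (𝓝 (∫ t in (0:ℝ)..1, f t)) := hc 1 Set.right_mem_uIcc
  refine h1.mono_left ?_
  rw [nhdsWithin_le_iff]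
  refine mem_of_superset (Ioo_mem_nhdsLT_of_mem (by norm_num : (1:ℝ) ∈ Set.Ioc 0 1)) ?_
  rw [Set.uIcc_of_le (by norm_num : (0:ℝ) ≤ 1)]
  exact Set.Ioo_subset_Icc_self

lemma key (n k : ℕ) (hn : 1 ≤ n) {b : ℝ} (hb : b < 1) :
    ∫ t in (0:ℝ)..b, t ^ (n-1) * Real.log (1-t) ^ (k+1)
      = (b^n - 1)/n * Real.log (1-b) ^ (k+1)
        - ((k:ℝ)+1)/n * ∑ i ∈ Finset.range n, ∫ t in (0:ℝ)..b, t ^ i * Real.log (1-t) ^ k := by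
  have hn0 : (n:ℝ) ≠ 0 := Nat.cast_ne_zero.2 (by omega)
  have hmem : ∀ t ∈ Set.uIcc (0:ℝ) b, t < 1 := by
    intro t ht
    rcases Set.mem_uIcc.1 ht with ⟨_, h2⟩ | ⟨_, h2⟩
    · exact lt_of_le_of_lt h2 hb
    · exact lt_of_le_of_lt h2 zero_lt_one
  set φ' : ℝ → ℝ := fun t => t ^ (n-1) * Real.log (1-t) ^ (k+1)
      + ((k:ℝ)+1)/n * (Real.log (1-t) ^ k * ∑ i ∈ Finset.range n, t ^ i) with hφ'
  have hderiv : ∀ t ∈ Set.uIcc (0:ℝ) b,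
      HasDerivAt (fun t : ℝ => (t^n - 1)/n * Real.log (1-t) ^ (k+1)) (φ' t) t := by
    intro t ht
    have ht1 : t < 1 := hmem t ht
    have h1t : (1:ℝ) - t ≠ 0 := sub_ne_zero.2 (by linarith)
    have h1 : HasDerivAt (fun t : ℝ => (t^n - 1)/n) ((n:ℝ) * t^(n-1) / n) t :=
      ((hasDerivAt_pow n t).sub_const 1).div_const n
    have h2 : HasDerivAt (fun t : ℝ => Real.log (1-t)) (-1/(1-t)) t :=
      ((hasDerivAt_id t).const_sub 1).log h1t
    have h3 := h2.pow (k+1)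
    have h4 := h1.mul h3
    convert h4 using 1
    · rfl
    · rfl
    · rfl
    have hgeom : (∑ i ∈ Finset.range n, t^i) * (t - 1) = t^n - 1 := geom_sum_mul t n
    simp only [hφ', Pi.pow_apply, Nat.add_sub_cancel, Nat.cast_add, Nat.cast_one]
    rw [mul_div_cancel_left₀ _ hn0, ← hgeom]
    field_simp
    ring
  have hclog : ContinuousOn (fun t : ℝ => Real.log (1-t)) (Set.uIcc 0 b) :=
    (continuous_const.sub continuous_id).continuousOn.log
      (fun t ht => sub_ne_zero.2 (hmem t ht).ne')
  have hsum : Continuous (fun t : ℝ => ∑ i ∈ Finset.range n, t ^ i) :=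
    continuous_finset_sum _ fun i _ => continuous_pow i
  have hA : IntervalIntegrable (fun t : ℝ => t ^ (n-1) * Real.log (1-t) ^ (k+1)) volume 0 b :=
    ((continuous_pow (n-1)).continuousOn.mul (hclog.pow _)).intervalIntegrable
  have hB : IntervalIntegrable
      (fun t : ℝ => ((k:ℝ)+1)/n * (Real.log (1-t) ^ k * ∑ i ∈ Finset.range n, t ^ i))
      volume 0 b :=
    (continuousOn_const.mul ((hclog.pow k).mul hsum.continuousOn)).intervalIntegrable
  have heq := intervalIntegral.integral_eq_sub_of_hasDerivAt hderiv
    (by rw [hφ']; exact hA.add hB)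
  have hφ0 : ((0:ℝ)^n - 1)/n * Real.log (1-0) ^ (k+1) = 0 := by
    simp
  rw [hφ0, sub_zero] at heq
  have hsplit : (∫ t in (0:ℝ)..b, φ' t)
      = (∫ t in (0:ℝ)..b, t ^ (n-1) * Real.log (1-t) ^ (k+1))
        + ((k:ℝ)+1)/n * ∑ i ∈ Finset.range n, ∫ t in (0:ℝ)..b, t ^ i * Real.log (1-t) ^ k := by
    rw [hφ', intervalIntegral.integral_add hA hB]
    congr 1
    rw [intervalIntegral.integral_const_mul]
    congr 1
    rw [← intervalIntegral.integral_finset_sum (f := fun i t => t ^ i * Real.log (1-t) ^ k)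
      (fun i _ => ((continuous_pow i).continuousOn.mul (hclog.pow k)).intervalIntegrable)]
    congr 1
    ext t
    rw [Finset.mul_sum]
    exact Finset.sum_congr rfl fun i _ => mul_comm _ _
  rw [hsplit] at heq
  linarith

noncomputable def Y : ℕ → ℕ → ℝ
  | 0, _ => 1
  | k + 1, n => ((k : ℝ) + 1) * ∑ m ∈ Finset.Icc 1 n, Y k m / m

theorem stmt12 (n k : ℕ) (hn : 1 ≤ n) :
    ∫ t in (0 : ℝ)..1, t ^ (n - 1) * (Real.log (1 - t)) ^ k = (-1 : ℝ) ^ k * Y k n / n := by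
  induction k generalizing n with
  | zero =>
    simp only [pow_zero, mul_one, Y]
    rw [integral_pow]
    simp only [one_pow, zero_pow (by omega : n - 1 + 1 ≠ 0)]
    rw [Nat.cast_sub hn]
    push_cast
    rw [sub_add_cancel]
    norm_num
  | succ k IH =>
    have hT1 : Tendsto (fun b => ∫ t in (0:ℝ)..b, t ^ (n-1) * Real.log (1-t) ^ (k+1))
        (𝓝[<] (1:ℝ)) (𝓝 (∫ t in (0:ℝ)..1, t ^ (n-1) * Real.log (1-t) ^ (k+1))) :=
      tendsto_primitive (intervalIntegrable_g (n-1) (k+1))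
    have hcomp : Tendsto (fun b : ℝ => 1 - b) (𝓝[<] (1:ℝ)) (𝓝[>] (0:ℝ)) := by
      rw [tendsto_nhdsWithin_iff]
      constructor
      · have h : Tendsto (fun b : ℝ => 1 - b) (𝓝 (1:ℝ)) (𝓝 0) := by
          simpa using (continuous_sub_left (1:ℝ)).tendsto 1
        exact h.mono_left nhdsWithin_le_nhds
      · filter_upwards [self_mem_nhdsWithin] with b hb
        exact sub_pos.2 (Set.mem_Iio.1 hb)
    have hT2 : Tendsto (fun b : ℝ => (b^n - 1)/n * Real.log (1-b) ^ (k+1))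
        (𝓝[<] (1:ℝ)) (𝓝 0) := by
      have h1 := (tendsto_mul_log_pow (k+1)).comp hcomp
      have h2 : Tendsto (fun b : ℝ => ∑ i ∈ Finset.range n, b ^ i) (𝓝[<] (1:ℝ))
          (𝓝 (∑ i ∈ Finset.range n, (1:ℝ) ^ i)) :=
        ((continuous_finset_sum _ fun i _ => continuous_pow i).tendsto 1).mono_left
          nhdsWithin_le_nhds
      have h3 := (h2.mul h1).const_mul (-(1:ℝ)/n)
      rw [mul_zero, mul_zero] at h3
      refine h3.congr fun b => ?_
      have hgeom : (∑ i ∈ Finset.range n, b^i) * (b - 1) = b^n - 1 := geom_sum_mul b n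
      show -(1:ℝ)/n * ((∑ i ∈ Finset.range n, b ^ i) * ((1-b) * Real.log (1-b) ^ (k+1)))
          = (b^n - 1)/n * Real.log (1-b) ^ (k+1)
      rw [← hgeom]
      ring
    have hT3 : ∀ i ∈ Finset.range n,
        Tendsto (fun b => ∫ t in (0:ℝ)..b, t ^ i * Real.log (1-t) ^ k)
          (𝓝[<] (1:ℝ)) (𝓝 ((-1:ℝ)^k * Y k (i+1) / ((i+1 : ℕ) : ℝ))) := by
      intro i _
      have h := IH (i+1) (Nat.le_add_left 1 i)
      simp only [Nat.add_sub_cancel] at h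
      exact h ▸ tendsto_primitive (intervalIntegrable_g i k)
    have hsum := tendsto_finset_sum (Finset.range n) hT3
    have hT4 := hT2.sub (hsum.const_mul (((k:ℝ)+1)/n))
    rw [zero_sub] at hT4
    have hT5 : Tendsto (fun b => ∫ t in (0:ℝ)..b, t ^ (n-1) * Real.log (1-t) ^ (k+1))
        (𝓝[<] (1:ℝ))
        (𝓝 (-(((k:ℝ)+1)/n * ∑ i ∈ Finset.range n,
          (-1:ℝ)^k * Y k (i+1) / ((i+1 : ℕ) : ℝ)))) := by
      refine hT4.congr' ?_
      filter_upwards [self_mem_nhdsWithin] with b (hb : b < 1)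
      exact (key n k hn hb).symm
    have hfin := tendsto_nhds_unique hT1 hT5
    rw [hfin]
    rw [show Y (k+1) n = ((k:ℝ)+1) * ∑ m ∈ Finset.Icc 1 n, Y k m / m from rfl]
    have hidx : ∑ m ∈ Finset.Icc 1 n, Y k m / (m:ℝ)
        = ∑ i ∈ Finset.range n, Y k (i+1) / ((i+1 : ℕ) : ℝ) := by
      rw [← Finset.Ico_add_one_right_eq_Icc, Finset.sum_Ico_eq_sum_range]
      exact Finset.sum_congr (by norm_num) fun i _ => by rw [add_comm 1 i]
    rw [hidx]
    have hpull : ∑ i ∈ Finset.range n, (-1:ℝ)^k * Y k (i+1) / ((i+1 : ℕ):ℝ)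
        = (-1:ℝ)^k * ∑ i ∈ Finset.range n, Y k (i+1) / ((i+1 : ℕ):ℝ) := by
      rw [Finset.mul_sum]
      exact Finset.sum_congr rfl fun i _ => mul_div_assoc _ _ _
    rw [hpull]
    push_cast
    ring
end
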